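/- arXiv:1611.01543 — 2 statements merged into one kernel-verified Lean document; each statement's English description precedes it below -/
import Mathlib

section
/- For nonnegative x, y ∈ ℝ^q, x is weakly submajorized by y if and only if x lies in the convex hull of the vectors (ε₁ y_{σ(1)}, …, ε_q y_{σ(q)}) over all sign choices ε_i ∈ {−1,1} and permutations σ of {1,…,q}. -/
open Matrix BigOperators
open scoped ComplexOrder

noncomputable def sortDesc {q : ℕ} (x : Fin q → ℝ) : Fin q → ℝ :=
  fun i => (x ∘ Tuple.sort x) i.rev

noncomputable def sval {m n : ℕ} (F : Matrix (Fin m) (Fin n) ℂ) :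
    Fin (min m n) → ℝ :=
  fun i => Real.sqrt (sortDesc (Matrix.posSemidef_conjTranspose_mul_self F).isHermitian.eigenvalues
    ⟨i, lt_of_lt_of_le i.isLt (min_le_right m n)⟩)

def IsPartialIsometry {m n : ℕ} (X : Matrix (Fin m) (Fin n) ℂ) : Prop :=
  ∀ f ∈ (LinearMap.ker (Matrix.toEuclideanLin X))ᗮ, ‖Matrix.toEuclideanLin X f‖ = ‖f‖

noncomputable def matAbs {m n : ℕ} (F : Matrix (Fin m) (Fin n) ℂ) :
    Matrix (Fin n) (Fin n) ℂ :=
  (Matrix.posSemidef_conjTranspose_mul_self F).isHermitian.eigenvectorUnitary.1 *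
    Matrix.diagonal ((↑) ∘ Real.sqrt ∘ (Matrix.posSemidef_conjTranspose_mul_self F).isHermitian.eigenvalues) *
    (star (Matrix.posSemidef_conjTranspose_mul_self F).isHermitian.eigenvectorUnitary : Matrix (Fin n) (Fin n) ℂ)

noncomputable def svdSigma {m n : ℕ} (F : Matrix (Fin m) (Fin n) ℂ) :
    Matrix (Fin m) (Fin n) ℂ :=
  fun i j => if h : (i : ℕ) = (j : ℕ) ∧ (i : ℕ) < min m n
    then (sval F ⟨i, h.2⟩ : ℂ) else 0

def IsSVD {m n : ℕ} (F : Matrix (Fin m) (Fin n) ℂ)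
    (V : Matrix (Fin m) (Fin m) ℂ) (W : Matrix (Fin n) (Fin n) ℂ) : Prop :=
  V ∈ Matrix.unitaryGroup (Fin m) ℂ ∧ W ∈ Matrix.unitaryGroup (Fin n) ℂ ∧
    F = V * svdSigma F * Wᴴ

def blockIso {m n : ℕ} (r : ℕ) (S : Matrix (Fin (m - r)) (Fin (n - r)) ℂ) :
    Matrix (Fin m) (Fin n) ℂ :=
  fun i j =>
    if (i : ℕ) < r ∧ (j : ℕ) < r then (if (i : ℕ) = (j : ℕ) then 1 else 0)
    else if h : r ≤ (i : ℕ) ∧ r ≤ (j : ℕ) then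
      S ⟨(i : ℕ) - r, by have := i.isLt; omega⟩ ⟨(j : ℕ) - r, by have := j.isLt; omega⟩
    else 0

def submajW {q : ℕ} (x y : Fin q → ℝ) : Prop :=
  ∀ k : ℕ, k ≤ q →
    (∑ i : Fin q, if (i : ℕ) < k then sortDesc x i else 0) ≤
      (∑ i : Fin q, if (i : ℕ) < k then sortDesc y i else 0)

structure SymmGauge (q : ℕ) where
  Φ : (Fin q → ℝ) → ℝ
  add_le : ∀ x y, Φ (x + y) ≤ Φ x + Φ y
  smul_eq : ∀ (c : ℝ) x, Φ (c • x) = |c| * Φ x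
  eq_zero : ∀ x, Φ x = 0 → x = 0
  symm : ∀ (σ : Equiv.Perm (Fin q)) (ε : Fin q → ℝ) (x : Fin q → ℝ),
    (∀ i, ε i = 1 ∨ ε i = -1) → Φ (fun i => ε i * x (σ i)) = Φ x

def SymmGauge.StrictlyConvex {q : ℕ} (G : SymmGauge q) : Prop :=
  ∀ x y, x ≠ y → G.Φ x = 1 → G.Φ y = 1 →
    ∀ t : ℝ, 0 < t → t < 1 → G.Φ (t • x + (1 - t) • y) < 1

noncomputable def gaugeNorm {m n : ℕ} (G : SymmGauge (min m n))
    (M : Matrix (Fin m) (Fin n) ℂ) : ℝ :=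
  G.Φ (sval M)

noncomputable def projMat {m : ℕ} (S : Submodule ℂ (EuclideanSpace ℂ (Fin m))) :
    Matrix (Fin m) (Fin m) ℂ :=
  Matrix.toEuclideanLin.symm (S.subtype ∘ₗ (S.orthogonalProjectionOnto).toLinearMap)

noncomputable def frobNorm {m n : ℕ} (M : Matrix (Fin m) (Fin n) ℂ) : ℝ :=
  Real.sqrt (∑ i, ∑ j, ‖M i j‖ ^ 2)

def IsMinPI {m n : ℕ} (G : SymmGauge (min m n)) (F : Matrix (Fin m) (Fin n) ℂ)
    (k : ℕ) (X : Matrix (Fin m) (Fin n) ℂ) : Prop :=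
  IsPartialIsometry X ∧ X.rank = k ∧
    ∀ Y : Matrix (Fin m) (Fin n) ℂ, IsPartialIsometry Y → Y.rank = k →
      gaugeNorm G (F - X) ≤ gaugeNorm G (F - Y)

def TriConstr {q : ℕ} (k : ℕ) (x : Fin q → ℝ) : Prop :=
  (∀ j, x j = -1 ∨ x j = 0 ∨ x j = 1) ∧ {j : Fin q | x j ≠ 0}.ncard = k

namespace Stmt6Aux
variable {q : ℕ}

noncomputable def rho (x : Fin q → ℝ) : Equiv.Perm (Fin q) :=
  Fin.revPerm.trans (Tuple.sort x)

lemma sortDesc_eq (x : Fin q → ℝ) (i : Fin q) : sortDesc x i = x (rho x i) := rfl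

lemma sortDesc_antitone (x : Fin q → ℝ) : Antitone (sortDesc x) := by
  intro i j h
  exact Tuple.monotone_sort x (Fin.rev_le_rev.mpr h)

lemma sm_bound {k : ℕ} {f : Fin k → Fin q} (hf : StrictMono f) :
    ∀ m (hm : m < k), m ≤ (f ⟨m, hm⟩ : ℕ) := by
  intro m
  induction m with
  | zero => intro _; exact Nat.zero_le _
  | succ n ih =>
    intro hm
    have hn : n < k := Nat.lt_of_succ_lt hm
    have h1 : f ⟨n, hn⟩ < f ⟨n + 1, hm⟩ := hf (by simp [Fin.lt_def])
    have h2 := ih hn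
    have h1' : (f ⟨n, hn⟩ : ℕ) < (f ⟨n + 1, hm⟩ : ℕ) := h1
    omega

lemma filter_eq_map {k : ℕ} (hk : k ≤ q) :
    Finset.univ.filter (fun i : Fin q => (i : ℕ) < k) =
      Finset.map (Fin.castLEEmb hk) Finset.univ := by
  ext i
  simp only [Finset.mem_filter, Finset.mem_univ, true_and, Finset.mem_map,
    Fin.castLEEmb_apply]
  constructor
  · intro h; exact ⟨⟨i, h⟩, rfl⟩
  · rintro ⟨j, rfl⟩; exact j.isLt

lemma topk_eq {k : ℕ} (hk : k ≤ q) (v : Fin q → ℝ) :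
    (∑ i : Fin q, if (i : ℕ) < k then v i else 0) =
      ∑ j : Fin k, v (Fin.castLE hk j) := by
  rw [← Finset.sum_filter, filter_eq_map hk, Finset.sum_map]
  rfl

/-- For antitone `v`, the sum over any finset is at most the sum of the first `card` values. -/
lemma sum_antitone_le (v : Fin q → ℝ) (hv : Antitone v) (s : Finset (Fin q)) :
    ∑ i ∈ s, v i ≤ ∑ i : Fin q, if (i : ℕ) < s.card then v i else 0 := by
  have hk : s.card ≤ q := by simpa using s.card_le_univ
  rw [topk_eq hk v]
  set e := s.orderIsoOfFin rfl with he
  have hsm : StrictMono (fun j : Fin s.card => ((e j : s) : Fin q)) := by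
    intro a b hab
    exact Subtype.coe_lt_coe.mpr (e.strictMono hab)
  calc ∑ i ∈ s, v i = ∑ a : s, v a := (Finset.sum_coe_sort s v).symm
    _ = ∑ j : Fin s.card, v ((e j : s) : Fin q) :=
        (Equiv.sum_comp e.toEquiv (fun a : s => v (a : Fin q))).symm
    _ ≤ ∑ j : Fin s.card, v (Fin.castLE hk j) := by
        apply Finset.sum_le_sum
        intro j _
        apply hv
        show Fin.castLE hk j ≤ _
        rw [Fin.le_def]
        exact sm_bound hsm j j.isLt

/-- Sum of `x` over any `k`-set is at most the top-`k` sum. -/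
lemma sum_le_topk (x : Fin q → ℝ) (s : Finset (Fin q)) :
    ∑ i ∈ s, x i ≤ ∑ i : Fin q, if (i : ℕ) < s.card then sortDesc x i else 0 := by
  classical
  set t := s.image (rho x).symm with ht
  have hinj : Function.Injective (rho x).symm := (rho x).symm.injective
  have hcard : t.card = s.card := Finset.card_image_of_injective s hinj
  have hsum : ∑ j ∈ t, sortDesc x j = ∑ i ∈ s, x i := by
    rw [ht, Finset.sum_image (fun a _ b _ h => hinj h)]
    refine Finset.sum_congr rfl fun i _ => ?_
    rw [sortDesc_eq]
    simp
  rw [← hsum, ← hcard]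
  exact sum_antitone_le (sortDesc x) (sortDesc_antitone x) t

/-- The top-`k` sum is achieved by some `k`-set. -/
lemma topk_achieved (x : Fin q → ℝ) {k : ℕ} (hk : k ≤ q) :
    ∃ s : Finset (Fin q), s.card = k ∧
      (∑ i : Fin q, if (i : ℕ) < k then sortDesc x i else 0) = ∑ i ∈ s, x i := by
  classical
  refine ⟨Finset.univ.image (fun j : Fin k => rho x (Fin.castLE hk j)), ?_, ?_⟩
  · rw [Finset.card_image_of_injective _ (fun a b h => ?_), Finset.card_univ, Fintype.card_fin]
    exact Fin.castLE_injective hk ((rho x).injective h)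
  · rw [topk_eq hk, Finset.sum_image (fun a _ b _ h => ?_)]
    · exact Finset.sum_congr rfl fun j _ => sortDesc_eq x _
    · exact Fin.castLE_injective hk ((rho x).injective h)



lemma abel_le {a u v : Fin q → ℝ} (ha : Antitone a) (ha0 : ∀ i, 0 ≤ a i)
    (h : ∀ k, k ≤ q → (∑ i : Fin q, if (i : ℕ) < k then u i else 0) ≤
      (∑ i : Fin q, if (i : ℕ) < k then v i else 0)) :
    ∑ i : Fin q, a i * u i ≤ ∑ i : Fin q, a i * v i := by
  rcases Nat.eq_zero_or_pos q with hq | hq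
  · subst hq; simp
  classical
  set A : ℕ → ℝ := fun k => if h : k < q then a ⟨k, h⟩ else 0 with hA
  set U : ℕ → ℝ := fun k => if h : k < q then u ⟨k, h⟩ else 0 with hU
  set V : ℕ → ℝ := fun k => if h : k < q then v ⟨k, h⟩ else 0 with hV
  have conv1 : ∀ (w : Fin q → ℝ) (W : ℕ → ℝ),
      (∀ (k : ℕ) (hk : k < q), W k = w ⟨k, hk⟩) →
      ∑ i : Fin q, a i * w i = ∑ i ∈ Finset.range q, A i * W i := by
    intro w W hW
    rw [← Fin.sum_univ_eq_sum_range (fun i => A i * W i) q]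
    refine Finset.sum_congr rfl fun i _ => ?_
    rw [hW i.val i.isLt, hA]
    simp
  have conv2 : ∀ (k : ℕ), k ≤ q → ∀ (w : Fin q → ℝ) (W : ℕ → ℝ),
      (∀ (k' : ℕ) (hk' : k' < q), W k' = w ⟨k', hk'⟩) →
      (∑ i : Fin q, if (i : ℕ) < k then w i else 0) = ∑ i ∈ Finset.range k, W i := by
    intro k hk w W hW
    calc (∑ i : Fin q, if (i : ℕ) < k then w i else 0)
        = ∑ i : Fin q, (fun n => if n < k then W n else 0) (i : ℕ) :=
          Finset.sum_congr rfl fun i _ => by simp only [hW i.val i.isLt]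
      _ = ∑ i ∈ Finset.range q, (fun n => if n < k then W n else 0) i :=
          by exact Fin.sum_univ_eq_sum_range (fun n => if n < k then W n else 0) q
      _ = ∑ i ∈ Finset.range q, if i < k then W i else 0 := rfl
      _ = ∑ i ∈ (Finset.range q).filter (fun n => n < k), W i :=
          (Finset.sum_filter _ _).symm
      _ = ∑ i ∈ Finset.range k, W i := by
          congr 1
          ext n
          simp only [Finset.mem_filter, Finset.mem_range]
          omega
  have hWU : ∀ (k' : ℕ) (hk' : k' < q), U k' = u ⟨k', hk'⟩ := fun k' hk' => by
    rw [hU]; simp [hk']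
  have hWV : ∀ (k' : ℕ) (hk' : k' < q), V k' = v ⟨k', hk'⟩ := fun k' hk' => by
    rw [hV]; simp [hk']
  have hpart : ∀ k, k ≤ q → ∑ i ∈ Finset.range k, U i ≤ ∑ i ∈ Finset.range k, V i := by
    intro k hk
    rw [← conv2 k hk u U hWU, ← conv2 k hk v V hWV]
    exact h k hk
  rw [conv1 u U hWU, conv1 v V hWV]
  have hby : ∀ W : ℕ → ℝ, ∑ i ∈ Finset.range q, A i * W i
      = A (q - 1) * ∑ i ∈ Finset.range q, W i
        - ∑ i ∈ Finset.range (q - 1), (A (i + 1) - A i) * ∑ j ∈ Finset.range (i + 1), W j := by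
    intro W
    simpa [smul_eq_mul] using Finset.sum_range_by_parts A W q
  rw [hby U, hby V]
  have hq1 : q - 1 < q := by omega
  have h1 : A (q - 1) * ∑ i ∈ Finset.range q, U i ≤ A (q - 1) * ∑ i ∈ Finset.range q, V i := by
    apply mul_le_mul_of_nonneg_left (hpart q le_rfl)
    rw [hA]; simp only [dif_pos hq1]; exact ha0 _
  have h2 : ∑ i ∈ Finset.range (q - 1), (A (i + 1) - A i) * ∑ j ∈ Finset.range (i + 1), V j
      ≤ ∑ i ∈ Finset.range (q - 1), (A (i + 1) - A i) * ∑ j ∈ Finset.range (i + 1), U j := by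
    apply Finset.sum_le_sum
    intro i hi
    rw [Finset.mem_range] at hi
    have hi1 : i < q := by omega
    have hi2 : i + 1 < q := by omega
    have hcoef : A (i + 1) - A i ≤ 0 := by
      rw [hA]; simp only [dif_pos hi1, dif_pos hi2]
      have := ha (show (⟨i, hi1⟩ : Fin q) ≤ ⟨i + 1, hi2⟩ by simp [Fin.le_def])
      linarith
    exact mul_le_mul_of_nonpos_left (hpart (i + 1) (by omega)) hcoef
  linarith

end Stmt6Aux

theorem stmt6 {q : ℕ} (x y : Fin q → ℝ) (hx : ∀ i, 0 ≤ x i) (hy : ∀ i, 0 ≤ y i) :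
    submajW x y ↔ x ∈ convexHull ℝ
      {z : Fin q → ℝ | ∃ (σ : Equiv.Perm (Fin q)) (ε : Fin q → ℝ),
        (∀ i, ε i = 1 ∨ ε i = -1) ∧ z = fun i => ε i * y (σ i)} := by
  classical
  constructor
  · -- weak submajorization implies membership in the convex hull
    intro hsub
    by_contra hmem
    set S : Set (Fin q → ℝ) := {z : Fin q → ℝ | ∃ (σ : Equiv.Perm (Fin q)) (ε : Fin q → ℝ),
        (∀ i, ε i = 1 ∨ ε i = -1) ∧ z = fun i => ε i * y (σ i)} with hSdef
    have hSfin : S.Finite := by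
      apply Set.Finite.subset (Set.finite_range
        (fun p : Equiv.Perm (Fin q) × (Fin q → Bool) =>
          fun i => (if p.2 i then (1:ℝ) else -1) * y (p.1 i)))
      rintro z ⟨σ, ε, hε, rfl⟩
      refine ⟨(σ, fun i => decide (ε i = 1)), ?_⟩
      funext i
      rcases hε i with h | h
      · simp [h]
      · norm_num [h]
    have hclosed : IsClosed (convexHull ℝ S) := (hSfin.isCompact_convexHull (𝕜 := ℝ)).isClosed
    obtain ⟨f, r, hfr, hrx⟩ := geometric_hahn_banach_closed_point
      (convex_convexHull ℝ S) hclosed hmem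
    have hf : ∀ w : Fin q → ℝ, f w = ∑ i, w i * f (fun j => if i = j then (1:ℝ) else 0) := by
      intro w
      conv_lhs => rw [pi_eq_sum_univ w]
      rw [map_sum]
      exact Finset.sum_congr rfl fun i _ => by rw [_root_.map_smul]; rfl
    set c : Fin q → ℝ := fun i => f (fun j => if i = j then (1:ℝ) else 0) with hc
    set b : Fin q → ℝ := fun i => |c i| with hb
    set ε : Fin q → ℝ := fun i => if 0 ≤ c i then 1 else -1 with hε
    have hεval : ∀ i, ε i = 1 ∨ ε i = -1 := fun i => by
      by_cases h : 0 ≤ c i <;> simp [hε, h]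
    have hcb : ∀ i, c i * ε i = b i := by
      intro i
      by_cases h : 0 ≤ c i
      · simp [hε, hb, h, abs_of_nonneg h]
      · rw [hε, hb]
        push_neg at h
        simp only [not_le.mpr h, if_neg, abs_of_neg h]
        simp [not_le.mpr h]
    have hb0 : ∀ i, 0 ≤ b i := fun i => abs_nonneg _
    set σ : Equiv.Perm (Fin q) := ((Stmt6Aux.rho b).symm).trans (Stmt6Aux.rho y) with hσ
    set z : Fin q → ℝ := fun j => ε j * y (σ j) with hz
    have hzC : z ∈ convexHull ℝ S := subset_convexHull ℝ S ⟨σ, ε, hεval, rfl⟩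
    have hfz : f z = ∑ i, sortDesc b i * sortDesc y i := by
      rw [hf]
      rw [← Equiv.sum_comp (Stmt6Aux.rho b) (fun j => z j * c j)]
      refine Finset.sum_congr rfl fun i _ => ?_
      show z (Stmt6Aux.rho b i) * c (Stmt6Aux.rho b i) = _
      have h1 : σ (Stmt6Aux.rho b i) = Stmt6Aux.rho y i := by
        rw [hσ]; simp
      rw [hz]
      show ε (Stmt6Aux.rho b i) * y (σ (Stmt6Aux.rho b i)) * c (Stmt6Aux.rho b i) = _
      rw [h1, Stmt6Aux.sortDesc_eq b, Stmt6Aux.sortDesc_eq y,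
        show ε (Stmt6Aux.rho b i) * y (Stmt6Aux.rho y i) * c (Stmt6Aux.rho b i)
          = (c (Stmt6Aux.rho b i) * ε (Stmt6Aux.rho b i)) * y (Stmt6Aux.rho y i) by ring,
        hcb]
    set τ : Equiv.Perm (Fin q) := (Stmt6Aux.rho b).trans (Stmt6Aux.rho x).symm with hτ
    have step1 : f x ≤ ∑ i, b i * x i := by
      rw [hf]
      apply Finset.sum_le_sum
      intro i _
      rw [show x i * c i = c i * x i from mul_comm _ _]
      exact mul_le_mul_of_nonneg_right (le_abs_self _) (hx i)
    have step2 : ∑ i, b i * x i = ∑ i, sortDesc b i * sortDesc x (τ i) := by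
      rw [← Equiv.sum_comp (Stmt6Aux.rho b) (fun j => b j * x j)]
      refine Finset.sum_congr rfl fun i _ => ?_
      show b (Stmt6Aux.rho b i) * x (Stmt6Aux.rho b i) = _
      rw [Stmt6Aux.sortDesc_eq b, Stmt6Aux.sortDesc_eq x]
      congr 2
      rw [hτ]; simp
    have step3 : ∑ i, sortDesc b i * sortDesc x (τ i) ≤ ∑ i, sortDesc b i * sortDesc x i := by
      have hmono : Monovary (sortDesc b) (sortDesc x) :=
        (Stmt6Aux.sortDesc_antitone b).monovary (Stmt6Aux.sortDesc_antitone x)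
      simpa [smul_eq_mul] using hmono.sum_smul_comp_perm_le_sum_smul (σ := τ)
    have step4 : ∑ i, sortDesc b i * sortDesc x i ≤ ∑ i, sortDesc b i * sortDesc y i := by
      apply Stmt6Aux.abel_le (Stmt6Aux.sortDesc_antitone b)
      · intro i
        rw [Stmt6Aux.sortDesc_eq b]
        exact hb0 _
      · exact hsub
    have hzlt := hfr z hzC
    rw [hfz] at hzlt
    linarith
  · -- membership in the convex hull implies weak submajorization
    intro hmem
    have hD : convexHull ℝ {z : Fin q → ℝ | ∃ (σ : Equiv.Perm (Fin q)) (ε : Fin q → ℝ),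
          (∀ i, ε i = 1 ∨ ε i = -1) ∧ z = fun i => ε i * y (σ i)} ⊆
        {w : Fin q → ℝ | ∀ k : ℕ, k ≤ q →
          (∑ i : Fin q, if (i : ℕ) < k then sortDesc w i else 0) ≤
            (∑ i : Fin q, if (i : ℕ) < k then sortDesc y i else 0)} := by
      apply convexHull_min
      · rintro z ⟨σ, ε, hε, rfl⟩ k hk
        obtain ⟨s, hcard, hach⟩ := Stmt6Aux.topk_achieved (fun i => ε i * y (σ i)) hk
        rw [hach]
        calc ∑ i ∈ s, ε i * y (σ i) ≤ ∑ i ∈ s, y (σ i) := by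
              apply Finset.sum_le_sum
              intro i _
              rcases hε i with h | h
              · rw [h, one_mul]
              · rw [h]; nlinarith [hy (σ i)]
          _ = ∑ j ∈ s.image σ, y j :=
              (Finset.sum_image (fun a _ b _ h => σ.injective h)).symm
          _ ≤ ∑ i : Fin q, if (i : ℕ) < (s.image σ).card then sortDesc y i else 0 :=
              Stmt6Aux.sum_le_topk y _
          _ = _ := by rw [Finset.card_image_of_injective _ σ.injective, hcard]
      · intro w1 hw1 w2 hw2 a bb ha hb hab k hk
        obtain ⟨s, hcard, hach⟩ := Stmt6Aux.topk_achieved (a • w1 + bb • w2) hk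
        rw [hach]
        have hsplit : ∑ i ∈ s, (a • w1 + bb • w2) i
            = a * ∑ i ∈ s, w1 i + bb * ∑ i ∈ s, w2 i := by
          simp only [Pi.add_apply, Pi.smul_apply, smul_eq_mul]
          rw [Finset.sum_add_distrib, Finset.mul_sum, Finset.mul_sum]
        rw [hsplit]
        have h1 : ∑ i ∈ s, w1 i ≤
            ∑ i : Fin q, if (i : ℕ) < k then sortDesc y i else 0 := by
          calc ∑ i ∈ s, w1 i
              ≤ ∑ i : Fin q, if (i : ℕ) < s.card then sortDesc w1 i else 0 :=
                Stmt6Aux.sum_le_topk w1 s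
            _ = ∑ i : Fin q, if (i : ℕ) < k then sortDesc w1 i else 0 := by rw [hcard]
            _ ≤ _ := hw1 k hk
        have h2 : ∑ i ∈ s, w2 i ≤
            ∑ i : Fin q, if (i : ℕ) < k then sortDesc y i else 0 := by
          calc ∑ i ∈ s, w2 i
              ≤ ∑ i : Fin q, if (i : ℕ) < s.card then sortDesc w2 i else 0 :=
                Stmt6Aux.sum_le_topk w2 s
            _ = ∑ i : Fin q, if (i : ℕ) < k then sortDesc w2 i else 0 := by rw [hcard]
            _ ≤ _ := hw2 k hk
        calc a * ∑ i ∈ s, w1 i + bb * ∑ i ∈ s, w2 i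
            ≤ a * (∑ i : Fin q, if (i : ℕ) < k then sortDesc y i else 0)
              + bb * (∑ i : Fin q, if (i : ℕ) < k then sortDesc y i else 0) :=
              add_le_add (mul_le_mul_of_nonneg_left h1 ha) (mul_le_mul_of_nonneg_left h2 hb)
          _ = _ := by rw [← add_mul, hab, one_mul]
    exact fun k hk => hD hmem k hk
end

section
/- Fix s₁ ≥ … ≥ s_q ≥ 0 with exactly r nonzero entries, and r < k ≤ q. Then x ∈ {−1,0,1}^q with exactly k nonzero coordinates minimizes f(x) = Σ_{j=1}^q (s_j − x_j)² if and only if x₁ = … = x_r = 1 and the remaining coordinates x_{r+1},…,x_q lie in {−1,0,1} with exactly k − r of them nonzero; in particular, there are 2^{k−r}·C(q−r, k−r) minimizers. -/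
open Matrix BigOperators
open scoped ComplexOrder

private lemma card_filter_val_lt {q : ℕ} (a : ℕ) (ha : a ≤ q) :
    (Finset.univ.filter (fun j : Fin q => (j : ℕ) < a)).card = a := by
  classical
  have h : Finset.univ.filter (fun j : Fin q => (j : ℕ) < a)
      = Finset.image (Fin.castLE ha) Finset.univ := by
    ext j
    simp only [Finset.mem_filter, Finset.mem_univ, true_and, Finset.mem_image]
    constructor
    · intro hj; exact ⟨⟨j, hj⟩, rfl⟩
    · rintro ⟨i, rfl⟩; exact i.isLt
  rw [h, Finset.card_image_of_injective _ (Fin.castLE_injective ha), Finset.card_univ,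
    Fintype.card_fin]

private lemma ncard_eq_filter {q : ℕ} (P : Fin q → Prop) [DecidablePred P] :
    {j : Fin q | P j}.ncard = (Finset.univ.filter P).card := by
  rw [← Set.ncard_coe_finset]
  congr 1
  ext j; simp

private lemma ncard_val_lt {q : ℕ} (a : ℕ) (ha : a ≤ q) :
    {j : Fin q | (j : ℕ) < a}.ncard = a := by
  classical
  rw [ncard_eq_filter, card_filter_val_lt a ha]

theorem stmt16 {q r k : ℕ} (s : Fin q → ℝ)
    (hmono : ∀ i j : Fin q, i ≤ j → s j ≤ s i) (hpos : ∀ j, 0 ≤ s j)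
    (hs : {j : Fin q | s j ≠ 0}.ncard = r)
    (hrk : r < k) (hkq : k ≤ q) :
    (∀ x : Fin q → ℝ, TriConstr k x →
      ((∀ y : Fin q → ℝ, TriConstr k y →
          (∑ j, (s j - x j) ^ 2) ≤ ∑ j, (s j - y j) ^ 2) ↔
        ((∀ j : Fin q, (j : ℕ) < r → x j = 1) ∧
          {j : Fin q | r ≤ (j : ℕ) ∧ x j ≠ 0}.ncard = k - r))) ∧
    {x : Fin q → ℝ | TriConstr k x ∧
        ∀ y : Fin q → ℝ, TriConstr k y →
          (∑ j, (s j - x j) ^ 2) ≤ ∑ j, (s j - y j) ^ 2}.ncard =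
      2 ^ (k - r) * (q - r).choose (k - r) := by
  classical
  have hrq : r < q := lt_of_lt_of_le hrk hkq
  -- the nonzero entries of s are exactly the first r
  have hs0 : ∀ j : Fin q, s j ≠ 0 ↔ (j : ℕ) < r := by
    intro j
    constructor
    · intro hj
      by_contra hlt
      push_neg at hlt
      have hsub : {i : Fin q | (i : ℕ) < (j : ℕ) + 1} ⊆ {i : Fin q | s i ≠ 0} := by
        intro i hi
        simp only [Set.mem_setOf_eq] at hi ⊢
        have hij : i ≤ j := by rw [Fin.le_def]; omega
        have h2 := hmono i j hij
        have hj' : 0 < s j := lt_of_le_of_ne (hpos j) (Ne.symm hj)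
        exact ne_of_gt (lt_of_lt_of_le hj' h2)
      have hc := Set.ncard_le_ncard hsub (Set.toFinite _)
      rw [ncard_val_lt ((j : ℕ) + 1) j.isLt, hs] at hc
      omega
    · intro hjr hj0
      have hsub : {i : Fin q | s i ≠ 0} ⊆ {i : Fin q | (i : ℕ) < (j : ℕ)} := by
        intro i hi
        simp only [Set.mem_setOf_eq] at hi ⊢
        by_contra hle
        push_neg at hle
        have hij : j ≤ i := by rw [Fin.le_def]; omega
        have h2 := hmono j i hij
        rw [hj0] at h2
        exact hi (le_antisymm h2 (hpos i))
      have hc := Set.ncard_le_ncard hsub (Set.toFinite _)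
      rw [ncard_val_lt (j : ℕ) (le_of_lt j.isLt), hs] at hc
      omega
  set g : Fin q → ℝ := fun j => if (j : ℕ) < r then s j else 0 with hg
  have hx2 : ∀ x : Fin q → ℝ, TriConstr k x → ∑ j, (x j) ^ 2 = (k : ℝ) := by
    rintro x ⟨htri, hcard⟩
    have h1 : ∀ j : Fin q, (x j) ^ 2 = if x j ≠ 0 then (1 : ℝ) else 0 := by
      intro j; rcases htri j with h | h | h <;> simp [h]
    rw [Finset.sum_congr rfl fun j _ => h1 j, Finset.sum_boole]
    rw [ncard_eq_filter (fun j => x j ≠ 0)] at hcard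
    norm_cast
  have key : ∀ x : Fin q → ℝ, TriConstr k x →
      ∑ j, (s j - x j) ^ 2 = (∑ j, (s j) ^ 2) + k - 2 * ∑ j, s j * x j := by
    intro x hx
    have h2 := hx2 x hx
    calc ∑ j, (s j - x j) ^ 2 = ∑ j, ((s j) ^ 2 - 2 * (s j * x j) + (x j) ^ 2) := by
          exact Finset.sum_congr rfl fun j _ => by ring
      _ = (∑ j, (s j) ^ 2) - 2 * (∑ j, s j * x j) + ∑ j, (x j) ^ 2 := by
          rw [Finset.sum_add_distrib, Finset.sum_sub_distrib, Finset.mul_sum]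
      _ = _ := by rw [h2]; ring
  have hterm : ∀ x : Fin q → ℝ, (∀ j, x j = -1 ∨ x j = 0 ∨ x j = 1) →
      ∀ j : Fin q, s j * x j ≤ g j := by
    intro x htri j
    by_cases hj : (j : ℕ) < r
    · simp only [hg, if_pos hj]
      have hx1 : x j ≤ 1 := by rcases htri j with h | h | h <;> rw [h] <;> norm_num
      calc s j * x j ≤ s j * 1 := mul_le_mul_of_nonneg_left hx1 (hpos j)
        _ = s j := mul_one _
    · have h0 : s j = 0 := by by_contra h; exact hj ((hs0 j).1 h)
      simp [hg, hj, h0]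
  have hle : ∀ x : Fin q → ℝ, (∀ j, x j = -1 ∨ x j = 0 ∨ x j = 1) →
      ∑ j, s j * x j ≤ ∑ j, g j := by
    intro x htri
    exact Finset.sum_le_sum fun j _ => hterm x htri j
  have hgx : ∀ x : Fin q → ℝ, (∀ j : Fin q, (j : ℕ) < r → x j = 1) →
      ∑ j, s j * x j = ∑ j, g j := by
    intro x hx
    apply Finset.sum_congr rfl
    intro j _
    by_cases hj : (j : ℕ) < r
    · simp [hg, hj, hx j hj]
    · have h0 : s j = 0 := by by_contra h; exact hj ((hs0 j).1 h)
      simp [hg, hj, h0]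
  have heq_iff : ∀ x : Fin q → ℝ, (∀ j, x j = -1 ∨ x j = 0 ∨ x j = 1) →
      ((∑ j, s j * x j = ∑ j, g j) ↔ ∀ j : Fin q, (j : ℕ) < r → x j = 1) := by
    intro x htri
    constructor
    · intro heq
      by_contra hcon
      push_neg at hcon
      obtain ⟨j₀, hj₀r, hj₀⟩ := hcon
      have hstrict : ∑ j, s j * x j < ∑ j, g j := by
        apply Finset.sum_lt_sum (fun j _ => hterm x htri j)
        refine ⟨j₀, Finset.mem_univ _, ?_⟩
        have hsj : 0 < s j₀ := lt_of_le_of_ne (hpos j₀) (Ne.symm ((hs0 j₀).2 hj₀r))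
        have hx0 : x j₀ ≤ 0 := by
          rcases htri j₀ with h | h | h
          · rw [h]; norm_num
          · rw [h]
          · exact absurd h hj₀
        have hmul : s j₀ * x j₀ ≤ 0 := mul_nonpos_of_nonneg_of_nonpos (le_of_lt hsj) hx0
        simp only [hg, if_pos hj₀r]
        linarith
      exact absurd heq (ne_of_lt hstrict)
    · exact hgx x
  set x₀ : Fin q → ℝ := fun j => if (j : ℕ) < k then (1 : ℝ) else 0 with hx₀def
  have hx₀ : TriConstr k x₀ := by
    constructor
    · intro j; by_cases h : (j : ℕ) < k <;> simp [hx₀def, h]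
    · have h1 : {j : Fin q | x₀ j ≠ 0} = {j : Fin q | (j : ℕ) < k} := by
        ext j; by_cases h : (j : ℕ) < k <;> simp [hx₀def, h]
      rw [h1, ncard_val_lt k hkq]
  have hchar : ∀ x : Fin q → ℝ, TriConstr k x →
      ((∀ y : Fin q → ℝ, TriConstr k y →
          (∑ j, (s j - x j) ^ 2) ≤ ∑ j, (s j - y j) ^ 2) ↔
        ∀ j : Fin q, (j : ℕ) < r → x j = 1) := by
    intro x hx
    constructor
    · intro hmin
      have h1 := hmin x₀ hx₀
      rw [key x hx, key x₀ hx₀] at h1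
      have h2 : ∑ j, s j * x₀ j = ∑ j, g j :=
        hgx x₀ fun j hj => by simp [hx₀def, lt_trans hj hrk]
      have h3 : ∑ j, g j ≤ ∑ j, s j * x j := by linarith
      exact (heq_iff x hx.1).1 (le_antisymm (hle x hx.1) h3)
    · intro h1 y hy
      rw [key x hx, key y hy]
      have h2 := hle y hy.1
      have h3 := hgx x h1
      linarith
  have hsplit : ∀ x : Fin q → ℝ, (∀ j : Fin q, (j : ℕ) < r → x j = 1) →
      {j : Fin q | x j ≠ 0}.ncard = r + {j : Fin q | r ≤ (j : ℕ) ∧ x j ≠ 0}.ncard := by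
    intro x h1
    have hdisj : Disjoint {j : Fin q | (j : ℕ) < r} {j : Fin q | r ≤ (j : ℕ) ∧ x j ≠ 0} := by
      rw [Set.disjoint_left]
      intro j hj hj2
      exact absurd hj (not_lt.2 hj2.1)
    have hU : {j : Fin q | x j ≠ 0}
        = {j : Fin q | (j : ℕ) < r} ∪ {j : Fin q | r ≤ (j : ℕ) ∧ x j ≠ 0} := by
      ext j
      simp only [Set.mem_setOf_eq, Set.mem_union]
      constructor
      · intro hj
        by_cases h : (j : ℕ) < r
        · exact Or.inl h
        · exact Or.inr ⟨le_of_not_gt h, hj⟩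
      · rintro (h | ⟨-, h⟩)
        · rw [h1 j h]; norm_num
        · exact h
    rw [hU, Set.ncard_union_eq hdisj, ncard_val_lt r (le_of_lt hrq)]
  constructor
  · intro x hx
    rw [hchar x hx]
    constructor
    · intro h1
      refine ⟨h1, ?_⟩
      have h2 := hsplit x h1
      rw [hx.2] at h2
      omega
    · exact fun h => h.1
  · -- counting part
    have hSeq : {x : Fin q → ℝ | TriConstr k x ∧
          ∀ y : Fin q → ℝ, TriConstr k y →
            (∑ j, (s j - x j) ^ 2) ≤ ∑ j, (s j - y j) ^ 2}
        = {x : Fin q → ℝ | (∀ j, x j = -1 ∨ x j = 0 ∨ x j = 1) ∧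
            (∀ j : Fin q, (j : ℕ) < r → x j = 1) ∧
            {j : Fin q | r ≤ (j : ℕ) ∧ x j ≠ 0}.ncard = k - r} := by
      ext x
      simp only [Set.mem_setOf_eq]
      constructor
      · rintro ⟨hx, hmin⟩
        have h1 := (hchar x hx).1 hmin
        refine ⟨hx.1, h1, ?_⟩
        have h2 := hsplit x h1
        rw [hx.2] at h2
        omega
      · rintro ⟨htri, h1, h2⟩
        have hx : TriConstr k x := by
          refine ⟨htri, ?_⟩
          rw [hsplit x h1, h2]
          omega
        exact ⟨hx, (hchar x hx).2 h1⟩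
    rw [hSeq]
    set R : Finset (Fin q) := Finset.univ.filter (fun j : Fin q => r ≤ (j : ℕ)) with hR
    have hRcard : R.card = q - r := by
      have h1 : R = Finset.univ.filter (fun j : Fin q => ¬ (j : ℕ) < r) := by
        apply Finset.filter_congr
        intro j _
        simp [not_lt]
      rw [h1, Finset.filter_not, Finset.card_sdiff_of_subset (Finset.filter_subset _ _),
        card_filter_val_lt r (le_of_lt hrq), Finset.card_univ, Fintype.card_fin]
    set F : (T : Finset (Fin q)) → ({j : Fin q // j ∈ T} → Bool) → (Fin q → ℝ) :=
      fun T gg j => if (j : ℕ) < r then 1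
        else if h : j ∈ T then (if gg ⟨j, h⟩ then 1 else -1) else 0 with hF
    have hmemR : ∀ T ∈ R.powersetCard (k - r), ∀ j ∈ T, r ≤ (j : ℕ) := by
      intro T hT j hj
      have hTR := (Finset.mem_powersetCard.1 hT).1
      have := hTR hj
      rw [hR] at this
      exact (Finset.mem_filter.1 this).2
    have hsuppF : ∀ T ∈ R.powersetCard (k - r), ∀ gg,
        {j : Fin q | r ≤ (j : ℕ) ∧ F T gg j ≠ 0} = ↑T := by
      intro T hT gg
      ext j
      simp only [Set.mem_setOf_eq, Finset.coe_sort_coe, Finset.mem_coe]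
      constructor
      · rintro ⟨hrj, hne⟩
        by_contra hjT
        apply hne
        simp [hF, not_lt.2 hrj, hjT]
      · intro hj
        refine ⟨hmemR T hT j hj, ?_⟩
        have hnl : ¬ (j : ℕ) < r := not_lt.2 (hmemR T hT j hj)
        simp only [hF, if_neg hnl, dif_pos hj]
        cases hgj : gg ⟨j, hj⟩ <;> norm_num
    have hFinj : ∀ T ∈ R.powersetCard (k - r), Function.Injective (F T) := by
      intro T hT g1 g2 hgg
      funext j
      have hrj : r ≤ ((j : Fin q) : ℕ) := hmemR T hT j.1 j.2
      have h2 := congrFun hgg j.1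
      simp only [hF, if_neg (not_lt.2 hrj), dif_pos j.2, Subtype.coe_eta] at h2
      cases hg1 : g1 j <;> cases hg2 : g2 j <;>
        rw [hg1, hg2] at h2 <;> first | rfl | (norm_num at h2)
    set B : Finset (Fin q → ℝ) :=
      (R.powersetCard (k - r)).biUnion (fun T => Finset.image (F T) Finset.univ) with hB
    have hBcard : B.card = (q - r).choose (k - r) * 2 ^ (k - r) := by
      rw [hB, Finset.card_biUnion]
      · have h1 : ∀ T ∈ R.powersetCard (k - r),
            (Finset.image (F T) Finset.univ).card = 2 ^ (k - r) := by
          intro T hT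
          rw [Finset.card_image_of_injective _ (hFinj T hT), Finset.card_univ,
            Fintype.card_fun, Fintype.card_bool, Fintype.card_coe,
            (Finset.mem_powersetCard.1 hT).2]
        rw [Finset.sum_congr rfl h1, Finset.sum_const, Finset.card_powersetCard, hRcard,
          smul_eq_mul]
      · intro T hT T' hT' hne
        rw [Function.onFun, Finset.disjoint_left]
        intro z hz hz'
        obtain ⟨g1, -, rfl⟩ := Finset.mem_image.1 hz
        obtain ⟨g2, -, hz2⟩ := Finset.mem_image.1 hz'
        apply hne
        have h1 := hsuppF T hT g1
        have h2 := hsuppF T' hT' g2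
        rw [hz2, h1] at h2
        exact Finset.coe_injective h2
    have hSB : {x : Fin q → ℝ | (∀ j, x j = -1 ∨ x j = 0 ∨ x j = 1) ∧
          (∀ j : Fin q, (j : ℕ) < r → x j = 1) ∧
          {j : Fin q | r ≤ (j : ℕ) ∧ x j ≠ 0}.ncard = k - r} = ↑B := by
      ext x
      simp only [Set.mem_setOf_eq, Finset.mem_coe]
      constructor
      · rintro ⟨htri, h1, h2⟩
        set T : Finset (Fin q) :=
          Finset.univ.filter (fun j : Fin q => r ≤ (j : ℕ) ∧ x j ≠ 0) with hT
        have hTmem : T ∈ R.powersetCard (k - r) := by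
          rw [Finset.mem_powersetCard]
          constructor
          · intro j hj
            rw [hT, Finset.mem_filter] at hj
            rw [hR, Finset.mem_filter]
            exact ⟨Finset.mem_univ _, hj.2.1⟩
          · rw [← ncard_eq_filter (fun j : Fin q => r ≤ (j : ℕ) ∧ x j ≠ 0)] at *
            exact h2
        set gg : {j : Fin q // j ∈ T} → Bool := fun j => decide (x j.1 = 1) with hgg
        rw [hB, Finset.mem_biUnion]
        refine ⟨T, hTmem, Finset.mem_image.2 ⟨gg, Finset.mem_univ _, ?_⟩⟩
        funext j
        by_cases hjr : (j : ℕ) < r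
        · simp [hF, hjr, h1 j hjr]
        · by_cases hjT : j ∈ T
          · have hxne : x j ≠ 0 := by
              rw [hT, Finset.mem_filter] at hjT
              exact hjT.2.2
            simp only [hF, if_neg hjr, dif_pos hjT, hgg]
            rcases htri j with h | h | h
            · have hne1 : ¬ x j = 1 := by rw [h]; norm_num
              have hd : decide (x j = 1) = false := by simp [hne1]
              simp only [hd]
              simp [h]
            · exact absurd h hxne
            · simp [h]
          · have hx0 : x j = 0 := by
              by_contra hxne
              exact hjT (by
                rw [hT, Finset.mem_filter]
                exact ⟨Finset.mem_univ _, le_of_not_gt hjr, hxne⟩)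
            simp [hF, hjr, hjT, hx0]
      · intro hx
        rw [hB, Finset.mem_biUnion] at hx
        obtain ⟨T, hT, hx2'⟩ := hx
        obtain ⟨gg, -, rfl⟩ := Finset.mem_image.1 hx2'
        refine ⟨?_, ?_, ?_⟩
        · intro j
          by_cases hjr : (j : ℕ) < r
          · right; right; simp [hF, hjr]
          · by_cases hjT : j ∈ T
            · simp only [hF, if_neg hjr, dif_pos hjT]
              cases gg ⟨j, hjT⟩ <;> simp
            · right; left; simp [hF, hjr, hjT]
        · intro j hjr
          simp [hF, hjr]
        · rw [hsuppF T hT gg, Set.ncard_coe_finset]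
          exact (Finset.mem_powersetCard.1 hT).2
    rw [hSB, Set.ncard_coe_finset, hBcard, mul_comm]
end
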